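/- Let T be a bounded sectorial operator on a Hilbert space with numerical range contained in the sector {z : |arg z| ≤ θ}, θ < π/2, and assume T has a bounded inverse. If T = U|T| is the polar decomposition with U unitary, then U is sectorial with semi-angle θ; in particular the spectrum of U is contained in the arc {e^{iφ} : |φ| ≤ θ}, and ‖I - U‖ ≤ 2 sin(θ/2). -/

import Mathlib

open scoped InnerProductSpace
open scoped InnerProductSpace
open ComplexConjugate
open ContinuousLinearMap in
lemma aux_isUnit {H : Type*} [NormedAddCommGroup H] [InnerProductSpace ℂ H] [CompleteSpace H]
    (B : H →L[ℂ] H) (c : ℝ) (hc : 0 < c)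
    (hB : ∀ x : H, c * ‖x‖ ≤ ‖B x‖)
    (hB' : ∀ x : H, c * ‖x‖ ≤ ‖ContinuousLinearMap.adjoint B x‖) :
    IsUnit B := by
  have hker : B.ker = ⊥ := by
    rw [LinearMap.ker_eq_bot']
    intro x hx
    have := hB x
    rw [show B x = 0 from hx, norm_zero] at this
    have : ‖x‖ ≤ 0 := by nlinarith
    simpa [norm_le_zero_iff] using this
  have hanti : AntilipschitzWith (⟨c, hc.le⟩ : NNReal)⁻¹ B := by
    apply B.antilipschitz_of_bound
    intro x
    have hcc : (((⟨c, hc.le⟩ : NNReal)⁻¹ : NNReal) : ℝ) = c⁻¹ := by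
      exact NNReal.coe_inv _
    rw [hcc, inv_mul_eq_div, le_div_iff₀ hc]
    simpa [mul_comm] using hB x
  have hclosed : IsClosed (Set.range B) := hanti.isClosed_range B.uniformContinuous
  have hrange : B.range = ⊤ := by
    have hcs : IsClosed ((B.range : Submodule ℂ H) : Set H) := by
      convert hclosed using 1
      exact LinearMap.coe_range _
    have : CompleteSpace (B.range) := hcs.completeSpace_coe
    rw [← Submodule.orthogonal_eq_bot_iff (K := B.range)]
    rw [Submodule.eq_bot_iff]
    intro x hx
    have hBx : ContinuousLinearMap.adjoint B x = 0 := by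
      have h0 : ∀ y : H, ⟪y, ContinuousLinearMap.adjoint B x⟫_ℂ = 0 := by
        intro y
        rw [ContinuousLinearMap.adjoint_inner_right]
        exact (Submodule.mem_orthogonal _ _).mp hx (B y) (LinearMap.mem_range_self _ y)
      have := h0 (ContinuousLinearMap.adjoint B x)
      rwa [inner_self_eq_zero] at this
    have := hB' x
    rw [hBx, norm_zero] at this
    have : ‖x‖ ≤ 0 := by nlinarith
    simpa [norm_le_zero_iff] using this
  let e := ContinuousLinearEquiv.ofBijective B hker hrange
  refine ⟨⟨B, e.symm.toContinuousLinearMap, ?_, ?_⟩, rfl⟩ <;>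
  · ext x
    simp [ContinuousLinearMap.mul_apply, e, ContinuousLinearEquiv.ofBijective_apply_symm_apply,
      ContinuousLinearEquiv.ofBijective_symm_apply_apply]

lemma aux_tan_abs_arg (w : ℂ) (hre : 0 < w.re) :
    Real.tan |Complex.arg w| = |w.im| / w.re := by
  rcases abs_cases (Complex.arg w) with ⟨he, hpos⟩ | ⟨he, hneg⟩
  · rw [he, Complex.tan_arg, abs_of_nonneg (Complex.arg_nonneg_iff.mp hpos)]
  · rw [he, Real.tan_neg, Complex.tan_arg,
      abs_of_neg (Complex.arg_neg_iff.mp hneg), neg_div]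

lemma aux_mem_K {θ : ℝ} (hθ0 : 0 ≤ θ) (hθ : θ < Real.pi / 2) (w : ℂ) (hw : w ≠ 0)
    (h : |Complex.arg w| ≤ θ) : 0 ≤ w.re ∧ |w.im| ≤ Real.tan θ * w.re := by
  have hpi : 0 < Real.pi / 2 := by positivity
  have h2 : |Complex.arg w| < Real.pi / 2 := lt_of_le_of_lt h hθ
  have hre : 0 < w.re := by
    rcases Complex.abs_arg_lt_pi_div_two_iff.mp h2 with h' | h'
    · exact h'
    · exact absurd h' hw
  refine ⟨hre.le, ?_⟩
  have htan : Real.tan |Complex.arg w| ≤ Real.tan θ := by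
    rcases eq_or_lt_of_le h with h' | h'
    · rw [h']
    · exact le_of_lt (Real.strictMonoOn_tan
        ⟨by linarith [abs_nonneg (Complex.arg w)], h2⟩ ⟨by linarith, hθ⟩ h')
  rw [aux_tan_abs_arg w hre] at htan
  calc |w.im| = |w.im| / w.re * w.re := by field_simp
  _ ≤ Real.tan θ * w.re := by nlinarith

lemma aux_arg_le {θ : ℝ} (hθ0 : 0 ≤ θ) (hθ : θ < Real.pi / 2) (w : ℂ) (hw : w ≠ 0)
    (h1 : 0 ≤ w.re) (h2 : |w.im| ≤ Real.tan θ * w.re) : |Complex.arg w| ≤ θ := by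
  have hre : 0 < w.re := by
    rcases eq_or_lt_of_le h1 with h' | h'
    · exfalso
      have him : w.im = 0 := by
        have h3 := h2
        rw [← h'] at h3
        have h4 : |w.im| ≤ 0 := by linarith [h3]; 
        simpa [abs_nonpos_iff] using h4
      exact hw (Complex.ext (by simp [← h']) him)
    · exact h'
  have harg : |Complex.arg w| < Real.pi / 2 :=
    Complex.abs_arg_lt_pi_div_two_iff.mpr (Or.inl hre)
  by_contra hcon
  push_neg at hcon
  have : Real.tan θ < Real.tan |Complex.arg w| :=
    Real.strictMonoOn_tan ⟨by linarith, by linarith⟩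
      ⟨by linarith [abs_nonneg (Complex.arg w)], harg⟩ hcon
  rw [aux_tan_abs_arg w hre] at this
  have : Real.tan θ * w.re < |w.im| := by
    calc Real.tan θ * w.re < |w.im| / w.re * w.re := by nlinarith
    _ = |w.im| := by field_simp
  linarith

lemma aux_re_inner_nonneg {H : Type*} [NormedAddCommGroup H] [InnerProductSpace ℂ H]
    [CompleteSpace H] (U : H →L[ℂ] H) (hnormal : IsStarNormal U)
    (c₁ c₂ : ℂ) (m : ℝ) (hm : 0 ≤ m)
    (hb : ∀ z ∈ spectrum ℂ U, ‖c₁ * z + c₂ * star z - (m : ℂ)‖ ≤ m) :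
    ∀ x : H, ‖x‖ = 1 → 0 ≤ (c₁ * ⟪x, U x⟫_ℂ + c₂ * conj ⟪x, U x⟫_ℂ).re := by
  have hA : cfc (fun z : ℂ => c₁ * z + c₂ * star z - (m : ℂ)) U
      = c₁ • U + c₂ • (star U) - (m : ℂ) • 1 := by
    rw [cfc_sub (fun z : ℂ => c₁ * z + c₂ * star z) (fun _ : ℂ => (m : ℂ)) U
        (by fun_prop) (by fun_prop),
      cfc_add U (fun z : ℂ => c₁ * z) (fun z : ℂ => c₂ * star z)
        (by fun_prop) (by fun_prop),
      cfc_const_mul c₁ (fun z : ℂ => z) U (by fun_prop),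
      cfc_const_mul c₂ (fun z : ℂ => star z) U (by fun_prop),
      cfc_id' ℂ U]
    have h1 : cfc (fun z : ℂ => star z) U = star U := cfc_star_id U
    have h2 : cfc (fun _ : ℂ => (m : ℂ)) U = (m : ℂ) • 1 := by
      rw [cfc_const (R := ℂ) (m : ℂ) U, Algebra.algebraMap_eq_smul_one]
    rw [h1, h2]
  have hnorm : ‖c₁ • U + c₂ • (star U) - (m : ℂ) • 1‖ ≤ m := by
    rw [← hA]
    exact norm_cfc_le hm hb
  intro x hx
  have hxx : ⟪x, x⟫_ℂ = 1 := by
    rw [inner_self_eq_norm_sq_to_K, hx]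
    norm_num
  set w : ℂ := ⟪x, U x⟫_ℂ with hwdef
  have hx1 : ⟪x, (c₁ • U + c₂ • (star U) - (m : ℂ) • 1) x⟫_ℂ
      = c₁ * w + c₂ * conj w - m := by
    have hstar : ⟪x, (star U) x⟫_ℂ = conj w := by
      rw [ContinuousLinearMap.star_eq_adjoint, ContinuousLinearMap.adjoint_inner_right,
        ← inner_conj_symm]
    simp only [ContinuousLinearMap.sub_apply, ContinuousLinearMap.add_apply,
      ContinuousLinearMap.smul_apply, ContinuousLinearMap.one_apply,
      inner_sub_right, inner_add_right, inner_smul_right, hstar, hxx, hwdef]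
    ring
  have habs : ‖c₁ * w + c₂ * conj w - (m : ℂ)‖ ≤ m := by
    rw [← hx1]
    refine le_trans (norm_inner_le_norm x _) ?_
    rw [hx]
    have h1 := (c₁ • U + c₂ • (star U) - (m : ℂ) • 1).le_opNorm x
    rw [hx, mul_one] at h1
    simpa using le_trans h1 hnorm
  have habs' : |(c₁ * w + c₂ * conj w - (m : ℂ)).re| ≤ m :=
    le_trans (Complex.abs_re_le_norm _) habs
  have hsplit : (c₁ * w + c₂ * conj w - (m : ℂ)).re = (c₁ * w + c₂ * conj w).re - m := by
    simp
  rw [hsplit] at habs'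
  linarith [(abs_le.mp habs').1]

set_option maxHeartbeats 2000000 in
/-- If `T` is a bounded invertible sectorial operator with numerical range in the sector
`{z : |arg z| ≤ θ}`, `0 ≤ θ < π/2`, and `T = U R` is its polar decomposition (`R = |T|`
positive with `R² = T*T`, `U` unitary), then `U` is sectorial with semi-angle `θ`: its
numerical range lies in the sector, its spectrum lies in the arc `{e^{iφ} : |φ| ≤ θ}`,
and `‖1 - U‖ ≤ 2 sin(θ/2)`. -/
theorem unitary_part_of_sectorial
    {H : Type*} [NormedAddCommGroup H] [InnerProductSpace ℂ H] [CompleteSpace H]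
    (T U R : H →L[ℂ] H) (θ : ℝ) (hθ0 : 0 ≤ θ) (hθ : θ < Real.pi / 2)
    (hTinv : ∃ S : H →L[ℂ] H, T ∘L S = 1 ∧ S ∘L T = 1)
    (hsec : ∀ x : H, ‖x‖ = 1 → ⟪x, T x⟫_ℂ ≠ 0 → |Complex.arg ⟪x, T x⟫_ℂ| ≤ θ)
    -- polar decomposition: R = |T| = (T*T)^{1/2}, U unitary, T = U R
    (hRsa : IsSelfAdjoint R) (hRpos : ∀ x : H, 0 ≤ (⟪x, R x⟫_ℂ).re)
    (hR2 : R ∘L R = ContinuousLinearMap.adjoint T ∘L T)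
    (hU : U ∈ unitary (H →L[ℂ] H)) (hTUR : T = U ∘L R) :
    (∀ x : H, ‖x‖ = 1 → ⟪x, U x⟫_ℂ ≠ 0 → |Complex.arg ⟪x, U x⟫_ℂ| ≤ θ) ∧
    (spectrum ℂ U ⊆ {z : ℂ | ∃ φ : ℝ, |φ| ≤ θ ∧ z = Complex.exp (φ * Complex.I)}) ∧
    ‖(1 : H →L[ℂ] H) - U‖ ≤ 2 * Real.sin (θ / 2) := by
  have hsin : 0 ≤ 2 * Real.sin (θ / 2) := by
    have := Real.pi_pos
    have := Real.sin_nonneg_of_nonneg_of_le_pi (x := θ / 2) (by linarith) (by linarith)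
    linarith
  rcases subsingleton_or_nontrivial H with hsub | hnt
  · have hCLM : Subsingleton (H →L[ℂ] H) :=
      ⟨fun f g => by ext x; exact Subsingleton.elim _ _⟩
    refine ⟨?_, ?_, ?_⟩
    · intro x hx _
      exact absurd hx (by rw [Subsingleton.elim x 0, norm_zero]; norm_num)
    · intro z hz
      rw [spectrum.mem_iff] at hz
      exact absurd (isUnit_of_subsingleton _) hz
    · rw [Subsingleton.elim ((1 : H →L[ℂ] H) - U) 0, norm_zero]
      exact hsin
  -- main case
  obtain ⟨Ti, hTi1, hTi2⟩ := hTinv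
  have hUmem := Unitary.mem_iff.mp hU
  have hnormal : IsStarNormal U := ⟨hUmem.1.trans hUmem.2.symm⟩
  set t := Real.tan θ with htdef
  have ht0 : 0 ≤ t := by
    have h := Real.strictMonoOn_tan.monotoneOn (a := 0) (b := θ)
      ⟨by linarith [Real.pi_pos], by linarith [Real.pi_pos]⟩
      ⟨by linarith [Real.pi_pos], hθ⟩ hθ0
    rw [Real.tan_zero] at h
    exact h
  have hmul : ∀ f g : H →L[ℂ] H, f * g = f ∘L g := fun f g => rfl
  have hTUR' : T = U * R := by rw [hmul]; exact hTUR
  have hTi1' : T * Ti = 1 := by rw [hmul]; exact hTi1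
  have hTi2' : Ti * T = 1 := by rw [hmul]; exact hTi2
  -- R is invertible with inverse Ti * U
  have hRinv1 : (Ti * U) * R = 1 := by
    rw [mul_assoc, ← hTUR', hTi2']
  have hR_eq : star U * T = R := by
    rw [hTUR', ← mul_assoc, hUmem.1, one_mul]
  have hRinv2 : R * (Ti * U) = 1 := by
    rw [← hR_eq, mul_assoc, ← mul_assoc T Ti U, hTi1', one_mul, hUmem.1]
  -- positivity of R
  have hR0 : (0 : H →L[ℂ] H) ≤ R := by
    rw [ContinuousLinearMap.nonneg_iff_isPositive]
    refine ⟨hRsa.isSymmetric, fun x => ?_⟩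
    have := hRpos x
    rwa [ContinuousLinearMap.reApplyInnerSelf, inner_re_symm]
  -- square root of R
  obtain ⟨S, hSS, hSsa⟩ : ∃ S : H →L[ℂ] H, S * S = R ∧ IsSelfAdjoint S := by
    refine ⟨CFC.sqrt R, ?_, IsSelfAdjoint.of_nonneg (CFC.sqrt_nonneg R)⟩
    have := CFC.sq_sqrt R hR0
    rwa [sq] at this
  have hSadj : ContinuousLinearMap.adjoint S = S :=
    (ContinuousLinearMap.isSelfAdjoint_iff').mp hSsa
  have hRx : ∀ x : H, ⟪x, R x⟫_ℂ = ((‖S x‖ ^ 2 : ℝ) : ℂ) := by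
    intro x
    have h := ContinuousLinearMap.adjoint_inner_left S (S x) x
    rw [hSadj] at h
    conv_lhs => rw [← hSS]
    rw [ContinuousLinearMap.mul_apply, ← h, inner_self_eq_norm_sq_to_K]
    norm_cast
  -- nontriviality consequences
  have hone_ne : (1 : H →L[ℂ] H) ≠ 0 := by
    obtain ⟨x, hx⟩ := exists_ne (0 : H)
    intro h
    have := congrArg (fun f : H →L[ℂ] H => f x) h
    simp at this
    exact hx this
  have hS0 : S ≠ 0 := by
    intro h
    apply hone_ne
    rw [← hRinv2, ← hSS, h]
    simp
  have hTiU0 : Ti * U ≠ 0 := by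
    intro h
    apply hone_ne
    rw [← hRinv2, h]
    simp
  set nS := ‖S‖ with hnS
  set nV := ‖Ti * U‖ with hnV
  have hnSpos : 0 < nS := norm_pos_iff.mpr hS0
  have hnVpos : 0 < nV := norm_pos_iff.mpr hTiU0
  set c0 : ℝ := (nV * nS)⁻¹ with hc0def
  have hc0 : 0 < c0 := by positivity
  have hSlow : ∀ x : H, ‖x‖ = 1 → c0 ≤ ‖S x‖ := by
    intro x hx
    have h1 : (Ti * U) (R x) = x := by
      have := congrArg (fun f : H →L[ℂ] H => f x) hRinv1
      simpa [ContinuousLinearMap.mul_apply] using this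
    have h2 : R x = S (S x) := by
      rw [← hSS, ContinuousLinearMap.mul_apply]
    have hchain : (1 : ℝ) ≤ nV * (nS * ‖S x‖) := by
      calc (1 : ℝ) = ‖x‖ := hx.symm
      _ = ‖(Ti * U) (R x)‖ := by rw [h1]
      _ ≤ nV * ‖R x‖ := (Ti * U).le_opNorm (R x)
      _ = nV * ‖S (S x)‖ := by rw [h2]
      _ ≤ nV * (nS * ‖S x‖) :=
          mul_le_mul_of_nonneg_left (S.le_opNorm (S x)) (norm_nonneg _)
    have hid : (nV * nS) * c0 = 1 := by
      rw [hc0def]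
      field_simp
    nlinarith [hchain, hnSpos, hnVpos, hc0]
  -- numerical range of T in the closed sector
  have hKmem : ∀ x : H, ‖x‖ = 1 →
      0 ≤ (⟪x, T x⟫_ℂ).re ∧ |(⟪x, T x⟫_ℂ).im| ≤ t * (⟪x, T x⟫_ℂ).re := by
    intro x hx
    by_cases h0 : ⟪x, T x⟫_ℂ = 0
    · rw [h0]
      simp
    · exact aux_mem_K hθ0 hθ _ h0 (hsec x hx h0)
  -- spectrum of U is contained in the closed sector
  have hspecK : ∀ z ∈ spectrum ℂ U, 0 ≤ z.re ∧ |z.im| ≤ t * z.re := by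
    intro z hz
    by_contra hzK
    have hKcl : IsClosed {w : ℂ | 0 ≤ w.re ∧ |w.im| ≤ t * w.re} := by
      rw [Set.setOf_and]
      exact (isClosed_le continuous_const Complex.continuous_re).inter
        (isClosed_le (continuous_abs.comp Complex.continuous_im)
          (continuous_const.mul Complex.continuous_re))
    have hK0 : (0 : ℂ) ∈ {w : ℂ | 0 ≤ w.re ∧ |w.im| ≤ t * w.re} := by simp
    have hd : 0 < Metric.infDist z {w : ℂ | 0 ≤ w.re ∧ |w.im| ≤ t * w.re} :=
      (hKcl.notMem_iff_infDist_pos ⟨0, hK0⟩).mp hzK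
    set Kd := Metric.infDist z {w : ℂ | 0 ≤ w.re ∧ |w.im| ≤ t * w.re} with hKddef
    set c := c0 ^ 2 * Kd with hcdef
    have hc : 0 < c := by positivity
    set B := T - z • R with hBdef
    have hBinner : ∀ x : H, ‖x‖ = 1 → c ≤ ‖⟪x, B x⟫_ℂ‖ := by
      intro x hx
      set w := ⟪x, T x⟫_ℂ with hwdef
      set r : ℝ := ‖S x‖ ^ 2 with hrdef
      have hw : ⟪x, B x⟫_ℂ = w - z * r := by
        rw [hBdef]
        simp only [ContinuousLinearMap.sub_apply, ContinuousLinearMap.smul_apply,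
          inner_sub_right, inner_smul_right, hRx x]
        rfl
      have hr : c0 ^ 2 ≤ r := by
        rw [hrdef]
        exact pow_le_pow_left₀ hc0.le (hSlow x hx) 2
      have hrpos : 0 < r := lt_of_lt_of_le (pow_pos hc0 2) hr
      have hwK := hKmem x hx
      have huK : ((r⁻¹ : ℝ) : ℂ) * w ∈ {w : ℂ | 0 ≤ w.re ∧ |w.im| ≤ t * w.re} := by
        constructor
        · rw [Complex.re_ofReal_mul]
          exact mul_nonneg (by positivity) hwK.1
        · rw [Complex.re_ofReal_mul, Complex.im_ofReal_mul, abs_mul,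
            abs_of_nonneg (by positivity : (0:ℝ) ≤ r⁻¹)]
          calc r⁻¹ * |w.im| ≤ r⁻¹ * (t * w.re) :=
            mul_le_mul_of_nonneg_left hwK.2 (by positivity)
          _ = t * (r⁻¹ * w.re) := by ring
      have hdist : Kd ≤ ‖z - ((r⁻¹ : ℝ) : ℂ) * w‖ := by
        have := Metric.infDist_le_dist_of_mem (x := z) huK
        rwa [Complex.dist_eq] at this
      have hrC : (r : ℂ) ≠ 0 := by
        exact_mod_cast hrpos.ne'
      have hfact : w - z * r = (r : ℂ) * (((r⁻¹ : ℝ) : ℂ) * w - z) := by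
        push_cast
        field_simp
      have habs2 : ‖z - ((r⁻¹ : ℝ) : ℂ) * w‖
          = ‖((r⁻¹ : ℝ) : ℂ) * w - z‖ := by
        rw [norm_sub_rev]
      calc c = c0 ^ 2 * Kd := hcdef
      _ ≤ r * ‖((r⁻¹ : ℝ) : ℂ) * w - z‖ := by
          have h6 : Kd ≤ ‖((r⁻¹ : ℝ) : ℂ) * w - z‖ := by
            rw [← habs2]
            exact hdist
          calc c0 ^ 2 * Kd ≤ r * Kd := mul_le_mul_of_nonneg_right hr hd.le
          _ ≤ r * ‖((r⁻¹ : ℝ) : ℂ) * w - z‖ :=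
            mul_le_mul_of_nonneg_left h6 hrpos.le
      _ = ‖(r : ℂ) * (((r⁻¹ : ℝ) : ℂ) * w - z)‖ := by
          rw [norm_mul, Complex.norm_real, Real.norm_eq_abs, abs_of_pos hrpos]
      _ = ‖w - z * r‖ := by rw [← hfact]
      _ = ‖⟪x, B x⟫_ℂ‖ := by rw [hw]
    have hscale : ∀ C : H →L[ℂ] H,
        (∀ x : H, ‖x‖ = 1 → c ≤ ‖⟪x, C x⟫_ℂ‖) →
        ∀ x : H, c * ‖x‖ ≤ ‖C x‖ := by
      intro C hC x
      rcases eq_or_ne x 0 with rfl | hx0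
      · simp
      · have hxn : (0:ℝ) < ‖x‖ := norm_pos_iff.mpr hx0
        set u := (‖x‖⁻¹ : ℝ) • x with hu
        have hu1 : ‖u‖ = 1 := by
          rw [hu, norm_smul, norm_inv, norm_norm]
          field_simp
        have h1 := hC u hu1
        have h2 : ‖⟪u, C u⟫_ℂ‖ ≤ ‖C u‖ := by
          have h3 := norm_inner_le_norm (𝕜 := ℂ) u (C u)
          rw [hu1, one_mul] at h3
          exact h3
        have h3 : ‖C u‖ = ‖x‖⁻¹ * ‖C x‖ := by
          rw [hu, ContinuousLinearMap.map_smul_of_tower, norm_smul, norm_inv, norm_norm]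
        have h4 : c ≤ ‖x‖⁻¹ * ‖C x‖ := by
          rw [← h3]
          exact le_trans h1 h2
        calc c * ‖x‖ ≤ (‖x‖⁻¹ * ‖C x‖) * ‖x‖ :=
          mul_le_mul_of_nonneg_right h4 (norm_nonneg x)
        _ = ‖C x‖ := by
          rw [mul_comm (‖x‖⁻¹) (‖C x‖), mul_assoc, inv_mul_cancel₀ hxn.ne', mul_one]
    have hBadjinner : ∀ x : H, ‖x‖ = 1 →
        c ≤ ‖⟪x, (ContinuousLinearMap.adjoint B) x⟫_ℂ‖ := by
      intro x hx
      have he : ⟪x, (ContinuousLinearMap.adjoint B) x⟫_ℂ = conj ⟪x, B x⟫_ℂ := by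
        rw [ContinuousLinearMap.adjoint_inner_right, ← inner_conj_symm]
      rw [he, Complex.norm_conj]
      exact hBinner x hx
    have hBunit : IsUnit B := aux_isUnit B c hc (hscale B hBinner)
      (hscale _ hBadjinner)
    have hTmul : T * (Ti * U) = U := by
      rw [← mul_assoc, hTi1', one_mul]
    have hconj : U - z • 1 = B * (Ti * U) := by
      rw [hBdef, sub_mul, smul_mul_assoc, hTmul, hRinv2]
    have hunit2 : IsUnit (U - z • 1) := by
      rw [hconj]
      exact hBunit.mul ⟨⟨Ti * U, R, hRinv1, hRinv2⟩, rfl⟩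
    rw [spectrum.mem_iff] at hz
    apply hz
    rw [Algebra.algebraMap_eq_smul_one]
    simpa [neg_sub] using hunit2.neg
  -- part 2 : spectrum in the arc
  have hspec2 : spectrum ℂ U ⊆
      {z : ℂ | ∃ φ : ℝ, |φ| ≤ θ ∧ z = Complex.exp (φ * Complex.I)} := by
    intro z hz
    have habs : ‖z‖ = 1 := by
      have h := spectrum.subset_circle_of_unitary hU hz
      rw [mem_sphere_zero_iff_norm] at h
      exact h
    have hz0 : z ≠ 0 := by
      intro h
      rw [h] at habs
      simp at habs
    obtain ⟨h1, h2⟩ := hspecK z hz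
    refine ⟨Complex.arg z, aux_arg_le hθ0 hθ z hz0 h1 h2, ?_⟩
    conv_lhs => rw [← Complex.norm_mul_exp_arg_mul_I z]
    rw [habs, Complex.ofReal_one, one_mul]
  -- part 3 : norm bound
  have hpart3 : ‖(1 : H →L[ℂ] H) - U‖ ≤ 2 * Real.sin (θ / 2) := by
    have hone : (1 : H →L[ℂ] H) - U = cfc (fun z : ℂ => 1 - z) U := by
      rw [cfc_sub (fun _ : ℂ => (1 : ℂ)) (fun z : ℂ => z) U (by fun_prop) (by fun_prop),
        cfc_id' ℂ U, cfc_const (1 : ℂ) U, map_one]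
    rw [hone]
    apply norm_cfc_le hsin
    intro z hz
    obtain ⟨φ, hφ, hze⟩ := hspec2 hz
    have hcos : Real.cos θ ≤ Real.cos φ := by
      calc Real.cos θ ≤ Real.cos |φ| :=
        Real.cos_le_cos_of_nonneg_of_le_pi (abs_nonneg φ) (by linarith [Real.pi_pos]) hφ
      _ = Real.cos φ := Real.cos_abs φ
    have hre : ((1 : ℂ) - Complex.exp (φ * Complex.I)).re = 1 - Real.cos φ := by
      rw [Complex.exp_mul_I]
      simp [Complex.cos_ofReal_re]
    have him : ((1 : ℂ) - Complex.exp (φ * Complex.I)).im = - Real.sin φ := by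
      rw [Complex.exp_mul_I]
      simp [Complex.sin_ofReal_re]
    have hsq : (1 - Real.cos φ) * (1 - Real.cos φ) + (- Real.sin φ) * (- Real.sin φ)
        ≤ (2 * Real.sin (θ / 2)) ^ 2 := by
      have hs : Real.sin (θ / 2) ^ 2 = 1 / 2 - Real.cos (2 * (θ / 2)) / 2 :=
        Real.sin_sq_eq_half_sub (θ / 2)
      rw [show 2 * (θ / 2) = θ by ring] at hs
      have hsc := Real.sin_sq_add_cos_sq φ
      nlinarith [hs, hsc, hcos]
    rw [hze, Complex.norm_def, Complex.normSq_apply, hre, him]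
    have h5 : Real.sqrt ((1 - Real.cos φ) * (1 - Real.cos φ)
        + (- Real.sin φ) * (- Real.sin φ)) ≤ Real.sqrt ((2 * Real.sin (θ / 2)) ^ 2) :=
      Real.sqrt_le_sqrt hsq
    rwa [Real.sqrt_sq hsin] at h5
  -- part 1 : numerical range of U
  have hsb : ∀ z ∈ spectrum ℂ U, ‖z‖ = 1 ∧ 0 ≤ z.re ∧ |z.im| ≤ t * z.re := by
    intro z hz
    refine ⟨?_, hspecK z hz⟩
    have h := spectrum.subset_circle_of_unitary hU hz
    rw [mem_sphere_zero_iff_norm] at h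
    exact h
  set cp : ℂ := (t / 2 : ℝ) + (1 / 2 : ℝ) * Complex.I with hcp
  set cm : ℂ := (t / 2 : ℝ) - (1 / 2 : ℝ) * Complex.I with hcm
  have hkey1 : ∀ z : ℂ, (1/2 : ℂ) * z + (1/2 : ℂ) * star z = ((z.re : ℝ) : ℂ) := by
    intro z
    rw [Complex.star_def]
    have h1 := Complex.add_conj z
    have h2 : (1/2 : ℂ) * z + (1/2 : ℂ) * (conj z) = (z + conj z) / 2 := by ring
    rw [h2, h1]
    push_cast
    ring
  have hkey2 : ∀ z : ℂ, cp * z + cm * star z = ((t * z.re - z.im : ℝ) : ℂ) := by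
    intro z
    rw [Complex.star_def, hcp, hcm]
    apply Complex.ext
    · simp [Complex.add_re, Complex.sub_re, Complex.mul_re, Complex.mul_im]
      ring
    · simp [Complex.add_im, Complex.sub_im, Complex.mul_re, Complex.mul_im]
      ring
  have hkey3 : ∀ z : ℂ, cm * z + cp * star z = ((t * z.re + z.im : ℝ) : ℂ) := by
    intro z
    rw [Complex.star_def, hcp, hcm]
    apply Complex.ext
    · simp [Complex.add_re, Complex.sub_re, Complex.mul_re, Complex.mul_im]
      ring
    · simp [Complex.add_im, Complex.sub_im, Complex.mul_re, Complex.mul_im]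
      ring
  have bnd1 : ∀ z ∈ spectrum ℂ U,
      ‖(1/2 : ℂ) * z + (1/2 : ℂ) * star z - (((1:ℝ)/2 : ℝ) : ℂ)‖ ≤ (1:ℝ)/2 := by
    intro z hz
    obtain ⟨h1, h2, h3⟩ := hsb z hz
    have hle : z.re ≤ 1 := le_trans (Complex.re_le_norm z) (le_of_eq h1)
    rw [hkey1 z, ← Complex.ofReal_sub, Complex.norm_real, Real.norm_eq_abs]
    rw [abs_le]
    exact ⟨by linarith, by linarith⟩
  have bnd2 : ∀ z ∈ spectrum ℂ U,
      ‖cp * z + cm * star z - (((t+1)/2 : ℝ) : ℂ)‖ ≤ (t+1)/2 := by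
    intro z hz
    obtain ⟨h1, h2, h3⟩ := hsb z hz
    have hle : z.re ≤ 1 := le_trans (Complex.re_le_norm z) (le_of_eq h1)
    have him : |z.im| ≤ 1 := le_trans (Complex.abs_im_le_norm z) (le_of_eq h1)
    rw [hkey2 z, ← Complex.ofReal_sub, Complex.norm_real, Real.norm_eq_abs]
    rw [abs_le]
    constructor
    · have := le_abs_self z.im
      linarith
    · have := neg_abs_le z.im
      nlinarith
  have bnd3 : ∀ z ∈ spectrum ℂ U,
      ‖cm * z + cp * star z - (((t+1)/2 : ℝ) : ℂ)‖ ≤ (t+1)/2 := by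
    intro z hz
    obtain ⟨h1, h2, h3⟩ := hsb z hz
    have hle : z.re ≤ 1 := le_trans (Complex.re_le_norm z) (le_of_eq h1)
    have him : |z.im| ≤ 1 := le_trans (Complex.abs_im_le_norm z) (le_of_eq h1)
    rw [hkey3 z, ← Complex.ofReal_sub, Complex.norm_real, Real.norm_eq_abs]
    rw [abs_le]
    constructor
    · have := neg_abs_le z.im
      linarith
    · have := le_abs_self z.im
      nlinarith
  have hP1 := aux_re_inner_nonneg U hnormal (1/2) (1/2) ((1:ℝ)/2) (by norm_num) bnd1
  have hP2 := aux_re_inner_nonneg U hnormal cp cm ((t+1)/2) (by linarith) bnd2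
  have hP3 := aux_re_inner_nonneg U hnormal cm cp ((t+1)/2) (by linarith) bnd3
  have hnum : ∀ x : H, ‖x‖ = 1 → ⟪x, U x⟫_ℂ ≠ 0 → |Complex.arg ⟪x, U x⟫_ℂ| ≤ θ := by
    intro x hx hne
    set w := ⟪x, U x⟫_ℂ with hw
    have e1 : (1/2 : ℂ) * w + (1/2 : ℂ) * conj w = ((w.re : ℝ) : ℂ) := by
      rw [show (conj w : ℂ) = star w from rfl]
      exact hkey1 w
    have e2 : cp * w + cm * conj w = ((t * w.re - w.im : ℝ) : ℂ) := by
      rw [show (conj w : ℂ) = star w from rfl]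
      exact hkey2 w
    have e3 : cm * w + cp * conj w = ((t * w.re + w.im : ℝ) : ℂ) := by
      rw [show (conj w : ℂ) = star w from rfl]
      exact hkey3 w
    have h1 := hP1 x hx
    have h2 := hP2 x hx
    have h3 := hP3 x hx
    rw [e1, Complex.ofReal_re] at h1
    rw [e2, Complex.ofReal_re] at h2
    rw [e3, Complex.ofReal_re] at h3
    exact aux_arg_le hθ0 hθ w hne h1 (abs_le.mpr ⟨by linarith, by linarith⟩)
  exact ⟨hnum, hspec2, hpart3⟩
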